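/- Let A = {a1 < a2 < ...} and B = {b1 < b2 < ...} be two infinite sequences of positive integers with b1 > 1 such that P(A) = ℕ \ B, let k be the index with a_k < b1 < a_{k+1}, so that P({a1, ..., a_k}) = [0, b1 − 1]. If b2 ≥ 3·b1 + 5, then a_{k+1} = b1 + 1, a_{k+2} ≤ 2·b1 + 1, a_{k+3} ≤ a_{k+2} + b1, and b2 ≥ a_{k+3} + a_{k+2} + b1. -/

import Mathlib

/-- The set of all finite subset sums of a set of positive integers
(finite sums of distinct elements; the empty sum 0 is included). -/
def subsetSums (S : Set ℕ) : Set ℕ :=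
  {n | ∃ F : Finset ℕ, ↑F ⊆ S ∧ ∑ x ∈ F, x = n}

lemma mem_ss {a : ℕ → ℕ} (ha : Function.Injective a) (T : Set ℕ) {n : ℕ} :
    n ∈ subsetSums (a '' T) ↔ ∃ G : Finset ℕ, ↑G ⊆ T ∧ ∑ i ∈ G, a i = n := by
  constructor
  · rintro ⟨F, hF, rfl⟩
    refine ⟨F.preimage a ha.injOn, fun i hi => ?_, ?_⟩
    · simp only [Finset.coe_preimage, Set.mem_preimage] at hi
      obtain ⟨j, hj, hji⟩ := hF hi
      exact (ha hji) ▸ hj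
    · exact Finset.sum_preimage a F ha.injOn id
        (fun x hx hxr => absurd ((hF hx).imp fun j hj => hj.2) hxr)
  · rintro ⟨G, hG, rfl⟩
    refine ⟨G.image a, ?_, ?_⟩
    · intro x hx
      simp only [Finset.coe_image, Set.mem_image, Finset.mem_coe] at hx
      obtain ⟨i, hi, rfl⟩ := hx
      exact ⟨i, hG hi, rfl⟩
    · exact Finset.sum_image (fun i _ j _ h => ha h)

/-- If `b₂ ≥ 3b₁+5` then `a_{k+1} = b₁+1`, `a_{k+2} ≤ 2b₁+1`,
`a_{k+3} ≤ a_{k+2}+b₁` and `b₂ ≥ a_{k+3}+a_{k+2}+b₁`.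
Here `a i`, `b i` are the `(i+1)`-st elements of `A`, `B`. -/
theorem stmt3 (a b : ℕ → ℕ) (ha : StrictMono a) (hapos : ∀ i, 0 < a i)
    (hb : StrictMono b) (hb1 : 1 < b 0)
    (hPA : subsetSums (Set.range a) = Set.univ \ Set.range b)
    (k : ℕ) (hk1 : a k < b 0) (hk2 : b 0 < a (k + 1))
    (hPk : subsetSums (a '' Set.Iio (k + 1)) = Set.Icc 0 (b 0 - 1))
    (hb2 : 3 * b 0 + 5 ≤ b 1) :
    a (k + 1) = b 0 + 1 ∧ a (k + 2) ≤ 2 * b 0 + 1 ∧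
      a (k + 3) ≤ a (k + 2) + b 0 ∧ a (k + 3) + a (k + 2) + b 0 ≤ b 1 := by
  have hinj := ha.injective
  -- membership characterization for full range
  have hA : ∀ n : ℕ, n ∈ subsetSums (Set.range a) ↔ ∃ G : Finset ℕ, ∑ i ∈ G, a i = n := by
    intro n
    rw [← Set.image_univ, mem_ss hinj]
    constructor
    · rintro ⟨G, _, h⟩; exact ⟨G, h⟩
    · rintro ⟨G, h⟩; exact ⟨G, by simp, h⟩
  -- elements below b 1 and ≠ b 0 are representable
  have memP : ∀ n : ℕ, n ≠ b 0 → n < b 1 → ∃ G : Finset ℕ, ∑ i ∈ G, a i = n := by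
    intro n hn0 hn1
    rw [← hA, hPA]
    refine ⟨trivial, ?_⟩
    rintro ⟨i, rfl⟩
    rcases Nat.eq_zero_or_pos i with rfl | hi
    · exact hn0 rfl
    · have hbi : b 1 ≤ b i := hb.monotone hi; omega
  -- b 1 not representable
  have nb1 : ¬ ∃ G : Finset ℕ, ∑ i ∈ G, a i = b 1 := by
    rw [← hA, hPA]
    rintro ⟨-, h⟩
    exact h ⟨1, rfl⟩
  -- small sums are < b 0
  have smallle : ∀ G : Finset ℕ, (∀ i ∈ G, i < k + 1) → ∑ i ∈ G, a i < b 0 := by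
    intro G hG
    have : (∑ i ∈ G, a i) ∈ subsetSums (a '' Set.Iio (k + 1)) := by
      rw [mem_ss hinj]
      exact ⟨G, fun i hi => hG i hi, rfl⟩
    rw [hPk] at this
    have := this.2
    omega
  -- every m < b 0 is a small sum
  have smallrep : ∀ m : ℕ, m < b 0 → ∃ G : Finset ℕ, (∀ i ∈ G, i < k + 1) ∧ ∑ i ∈ G, a i = m := by
    intro m hm
    have : m ∈ subsetSums (a '' Set.Iio (k + 1)) := by
      rw [hPk]; constructor <;> omega
    rw [mem_ss hinj] at this
    obtain ⟨G, hG, hs⟩ := this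
    exact ⟨G, fun i hi => hG hi, hs⟩
  -- decomposition of a representation
  have decomp : ∀ (G : Finset ℕ) (n : ℕ), ∑ i ∈ G, a i = n →
      ∃ L : Finset ℕ, L ⊆ G ∧ (∀ j ∈ L, k + 1 ≤ j) ∧
        (∀ j ∈ G, k + 1 ≤ j → j ∈ L) ∧ n < b 0 + ∑ j ∈ L, a j := by
    intro G n hG
    refine ⟨G.filter (fun j => k + 1 ≤ j), Finset.filter_subset _ _,
      fun j hj => (Finset.mem_filter.1 hj).2,
      fun j hj h => Finset.mem_filter.2 ⟨hj, h⟩, ?_⟩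
    have hsplit : ∑ i ∈ G.filter (fun j => ¬ k + 1 ≤ j), a i
        + ∑ i ∈ G.filter (fun j => k + 1 ≤ j), a i = n := by
      rw [Finset.sum_filter_not_add_sum_filter] at *
      exact hG
    have hs : ∑ i ∈ G.filter (fun j => ¬ k + 1 ≤ j), a i < b 0 :=
      smallle _ (fun i hi => by have := (Finset.mem_filter.1 hi).2; omega)
    omega
  have hb0 : 2 ≤ b 0 := hb1
  -- Part 1 : a (k+1) = b 0 + 1
  have hp1 : a (k + 1) = b 0 + 1 := by
    obtain ⟨G, hG⟩ := memP (b 0 + 1) (by omega) (by omega)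
    obtain ⟨L, hLG, hLlb, _, hlt⟩ := decomp G _ hG
    have hLne : L.Nonempty := by
      rcases L.eq_empty_or_nonempty with rfl | h
      · simp at hlt
      · exact h
    obtain ⟨j, hj⟩ := hLne
    have h1 : a j ≤ ∑ i ∈ L, a i :=
      Finset.single_le_sum (fun i _ => Nat.zero_le _) hj
    have h2 : ∑ i ∈ L, a i ≤ b 0 + 1 := hG ▸ Finset.sum_le_sum_of_subset hLG
    have h3 : a (k + 1) ≤ a j := ha.monotone (hLlb j hj)
    omega
  -- general fact: a (k+2) ≥ b0+2
  have hak2 : b 0 + 2 ≤ a (k + 2) := by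
    have := ha (show k + 1 < k + 2 by omega); omega
  -- Part 2 : a (k+2) ≤ 2 b0 + 1
  have hp2 : a (k + 2) ≤ 2 * b 0 + 1 := by
    obtain ⟨G, hG⟩ := memP (2 * b 0 + 1) (by omega) (by omega)
    obtain ⟨L, hLG, hLlb, _, hlt⟩ := decomp G _ hG
    have hsumL : ∑ i ∈ L, a i ≤ 2 * b 0 + 1 := hG ▸ Finset.sum_le_sum_of_subset hLG
    -- there must be j ∈ L with j ≥ k+2
    by_cases hcase : ∃ j ∈ L, k + 2 ≤ j
    · obtain ⟨j, hj, hj2⟩ := hcase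
      have h1 : a j ≤ ∑ i ∈ L, a i :=
        Finset.single_le_sum (fun i _ => Nat.zero_le _) hj
      have h3 : a (k + 2) ≤ a j := ha.monotone hj2
      omega
    · push_neg at hcase
      -- all elements of L equal k+1
      have hsub : L ⊆ {k + 1} := by
        intro j hj
        have := hLlb j hj
        have := hcase j hj
        simp only [Finset.mem_singleton]
        omega
      have : ∑ i ∈ L, a i ≤ ∑ i ∈ ({k + 1} : Finset ℕ), a i :=
        Finset.sum_le_sum_of_subset hsub
      rw [Finset.sum_singleton, hp1] at this
      omega
  -- Part 3 : a (k+3) ≤ a(k+2) + b0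
  have hak3 : a (k + 2) + 1 ≤ a (k + 3) := by
    have := ha (show k + 2 < k + 3 by omega); omega
  have hp3 : a (k + 3) ≤ a (k + 2) + b 0 := by
    set p := a (k + 2) with hp
    obtain ⟨G, hG⟩ := memP (p + b 0) (by omega) (by omega)
    obtain ⟨L, hLG, hLlb, _, hlt⟩ := decomp G _ hG
    have hsumL : ∑ i ∈ L, a i ≤ p + b 0 := hG ▸ Finset.sum_le_sum_of_subset hLG
    by_cases hcase : ∃ j ∈ L, k + 3 ≤ j
    · obtain ⟨j, hj, hj2⟩ := hcase
      have h1 : a j ≤ ∑ i ∈ L, a i :=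
        Finset.single_le_sum (fun i _ => Nat.zero_le _) hj
      have h3 : a (k + 3) ≤ a j := ha.monotone hj2
      omega
    · exfalso
      push_neg at hcase
      by_cases h2 : k + 2 ∈ L
      · by_cases h1 : k + 1 ∈ L
        · have hsub : ({k + 1, k + 2} : Finset ℕ) ⊆ L := by
            intro j hj; simp at hj; rcases hj with rfl | rfl <;> assumption
          have : ∑ i ∈ ({k + 1, k + 2} : Finset ℕ), a i ≤ ∑ i ∈ L, a i :=
            Finset.sum_le_sum_of_subset hsub
          rw [Finset.sum_pair (by omega)] at this
          omega
        · have hsub : L ⊆ {k + 2} := by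
            intro j hj
            have := hLlb j hj; have := hcase j hj
            simp only [Finset.mem_singleton]
            rcases Nat.lt_or_ge j (k + 2) with h | h
            · exact absurd (by omega : j = k + 1) (fun e => h1 (e ▸ hj))
            · omega
          have : ∑ i ∈ L, a i ≤ ∑ i ∈ ({k + 2} : Finset ℕ), a i :=
            Finset.sum_le_sum_of_subset hsub
          simp at this
          omega
      · have hsub : L ⊆ {k + 1} := by
          intro j hj
          have := hLlb j hj; have := hcase j hj
          simp only [Finset.mem_singleton]
          rcases Nat.lt_or_ge j (k + 2) with h | h
          · omega
          · exact absurd (by omega : j = k + 2) (fun e => h2 (e ▸ hj))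
        have : ∑ i ∈ L, a i ≤ ∑ i ∈ ({k + 1} : Finset ℕ), a i :=
          Finset.sum_le_sum_of_subset hsub
        rw [Finset.sum_singleton, hp1] at this
        omega
  -- Part 4
  have hp4 : a (k + 3) + a (k + 2) + b 0 ≤ b 1 := by
    by_contra hcon
    push_neg at hcon
    -- build a representation of b 1
    apply nb1
    set p := a (k + 2) with hpd
    set q := a (k + 3) with hqd
    have build : ∀ (D : Finset ℕ), (∀ j ∈ D, k + 1 ≤ j) →
        ∀ m, m < b 0 → ∃ G : Finset ℕ, ∑ i ∈ G, a i = m + ∑ j ∈ D, a j := by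
      intro D hD m hm
      obtain ⟨S₀, hS₀, hsum⟩ := smallrep m hm
      refine ⟨S₀ ∪ D, ?_⟩
      rw [Finset.sum_union ?_, hsum]
      rw [Finset.disjoint_left]
      intro i hi hiD
      have := hS₀ i hi
      have := hD i hiD
      omega
    have hn1 : 3 * b 0 + 5 ≤ b 1 := hb2
    -- case analysis on where b 1 lies
    have hcases : (b 0 + 1 ≤ b 1 ∧ b 1 ≤ 2 * b 0) ∨ (p ≤ b 1 ∧ b 1 < p + b 0) ∨
        (q ≤ b 1 ∧ b 1 < q + b 0) ∨ (p + b 0 + 1 ≤ b 1 ∧ b 1 ≤ p + 2 * b 0) ∨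
        (q + b 0 + 1 ≤ b 1 ∧ b 1 ≤ q + 2 * b 0) ∨ (p + q ≤ b 1 ∧ b 1 < p + q + b 0) := by
      omega
    have s1 : ∑ j ∈ ({k + 1} : Finset ℕ), a j = b 0 + 1 := by simp [hp1]
    have s2 : ∑ j ∈ ({k + 2} : Finset ℕ), a j = p := by simp [hpd]
    have s3 : ∑ j ∈ ({k + 3} : Finset ℕ), a j = q := by simp [hqd]
    have s12 : ∑ j ∈ ({k + 1, k + 2} : Finset ℕ), a j = b 0 + 1 + p := by
      rw [Finset.sum_pair (by omega)]; simp [hp1, hpd]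
    have s13 : ∑ j ∈ ({k + 1, k + 3} : Finset ℕ), a j = b 0 + 1 + q := by
      rw [Finset.sum_pair (by omega)]; simp [hp1, hqd]
    have s23 : ∑ j ∈ ({k + 2, k + 3} : Finset ℕ), a j = p + q := by
      rw [Finset.sum_pair (by omega)]
    rcases hcases with h | h | h | h | h | h
    · obtain ⟨G, hG⟩ := build {k + 1} (by intro j hj; simp at hj; omega)
        (b 1 - (b 0 + 1)) (by omega)
      exact ⟨G, by rw [hG, s1]; omega⟩
    · obtain ⟨G, hG⟩ := build {k + 2} (by intro j hj; simp at hj; omega)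
        (b 1 - p) (by omega)
      exact ⟨G, by rw [hG, s2]; omega⟩
    · obtain ⟨G, hG⟩ := build {k + 3} (by intro j hj; simp at hj; omega)
        (b 1 - q) (by omega)
      exact ⟨G, by rw [hG, s3]; omega⟩
    · obtain ⟨G, hG⟩ := build {k + 1, k + 2} (by intro j hj; simp at hj; omega)
        (b 1 - (b 0 + 1 + p)) (by omega)
      exact ⟨G, by rw [hG, s12]; omega⟩
    · obtain ⟨G, hG⟩ := build {k + 1, k + 3} (by intro j hj; simp at hj; omega)
        (b 1 - (b 0 + 1 + q)) (by omega)
      exact ⟨G, by rw [hG, s13]; omega⟩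
    · obtain ⟨G, hG⟩ := build {k + 2, k + 3} (by intro j hj; simp at hj; omega)
        (b 1 - (p + q)) (by omega)
      exact ⟨G, by rw [hG, s23]; omega⟩
  exact ⟨hp1, hp2, hp3, hp4⟩
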